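/- Let F be a field, n ≥ 1, and C ⊆ {1,…,n−1}. Let w ∈ S_n with Des(w) ⊆ C, and let (i_1,…,i_k) be any reduced word for w. Then π̄_{(i_1,…,i_k)}(x_C) = w·x_C + Σ_d c_d·x^d, where the sum ranges over exponent vectors d ∈ ℕ^n with x^d ≺ x_C and the c_d lie in F; equivalently, every monomial x^d occurring with nonzero coefficient in π̄_{(i_1,…,i_k)}(x_C) − w·x_C satisfies λ(d) <_lex λ(e_C), where e_C is the exponent vector of x_C. -/

import Mathlib

open MvPolynomial

/-- The adjacent transposition `s_i = (i, i+1)` (one-based labelling of positions) as a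
permutation of `Fin n` (zero-based); it is the identity if `i` is out of range. -/
def sswap (n : ℕ) (i : ℕ) : Equiv.Perm (Fin n) :=
  if h : 1 ≤ i ∧ i < n then Equiv.swap ⟨i - 1, by omega⟩ ⟨i, h.2⟩ else 1

/-- The number of inversions `inv(w) = #{(i,j) : i < j, w(i) > w(j)}`. -/
def invNum {n : ℕ} (w : Equiv.Perm (Fin n)) : ℕ :=
  (Finset.univ.filter (fun p : Fin n × Fin n => p.1 < p.2 ∧ w p.2 < w p.1)).card

/-- The value `w(i)` of a permutation at the one-based position `i`, as a natural number
(zero-based); junk value `0` if out of range. -/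
def valAt (n : ℕ) (w : Equiv.Perm (Fin n)) (i : ℕ) : ℕ :=
  if h : i - 1 < n then (w ⟨i - 1, h⟩ : Fin n) else 0

/-- The descent set `Des(w) = {i ∈ {1,…,n−1} : w(i) > w(i+1)}` (one-based). -/
def permDes (n : ℕ) (w : Equiv.Perm (Fin n)) : Finset ℕ :=
  (Finset.Icc 1 (n - 1)).filter (fun i => valAt n w (i + 1) < valAt n w i)

/-- The monomial `x_C = ∏_{i ∈ C} x₁x₂⋯x_i` (with one-based variables `x₁,…,x_n`). -/
noncomputable def xC (F : Type*) [Field F] (n : ℕ) (C : Finset ℕ) :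
    MvPolynomial (Fin n) F :=
  ∏ i ∈ C, ∏ j ∈ Finset.range i, (if h : j < n then X (⟨j, h⟩ : Fin n) else 1)

/-- `λ(d)`: the list of the nonzero entries of the exponent vector `d`, sorted in
decreasing order (the partition associated with `d`). -/
def lam {n : ℕ} (d : Fin n →₀ ℕ) : List ℕ :=
  ((Multiset.filter (fun x => x ≠ 0)
    (Finset.univ.val.map fun t : Fin n => d t)).sort (· ≤ ·)).reverse



/-- sort a multiset in decreasing order -/
def sd (M : Multiset ℕ) : List ℕ := (M.sort (· ≤ ·)).reverse

theorem sd_coe (M : Multiset ℕ) : (sd M : Multiset ℕ) = M := by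
  simp [sd, Multiset.sort_eq]

theorem sd_sorted (M : Multiset ℕ) : List.Pairwise (· ≥ ·) (sd M) := by
  have := Multiset.pairwise_sort M (· ≤ ·)
  exact List.pairwise_reverse.mpr (by simpa using this)

theorem sd_uniq {M : Multiset ℕ} {l : List ℕ} (hs : List.Pairwise (· ≥ ·) l)
    (hc : (l : Multiset ℕ) = M) : sd M = l := by
  have h1 : List.Pairwise (· ≤ ·) l.reverse := by
    exact List.pairwise_reverse.mpr (by simpa using hs)
  have hp : (M.sort (· ≤ ·)).Perm l.reverse := by
    apply Multiset.coe_eq_coe.mp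
    rw [Multiset.sort_eq, ← hc]
    simp
  have := List.Perm.eq_of_pairwise' (Multiset.pairwise_sort _ _) h1 hp
  simp [sd, this]

theorem sd_zero : sd 0 = [] := by simp [sd]

theorem sd_ne_nil {M : Multiset ℕ} (h : M ≠ 0) : sd M ≠ [] := by
  intro hh
  apply h
  rw [← sd_coe M, hh]; rfl

/-- peel the max -/
theorem sd_cons_max {M : Multiset ℕ} {m : ℕ} (hm : m ∈ M) (hmax : ∀ x ∈ M, x ≤ m) :
    sd M = m :: sd (M.erase m) := by
  apply sd_uniq
  · refine List.pairwise_cons.mpr ⟨?_, sd_sorted _⟩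
    intro b hb
    apply hmax
    have : b ∈ (sd (M.erase m) : Multiset ℕ) := by exact_mod_cast Multiset.mem_coe.mpr hb
    rw [sd_coe] at this
    exact Multiset.mem_of_mem_erase this
  · show (m ::ₘ (sd (M.erase m) : Multiset ℕ)) = M
    rw [sd_coe, Multiset.cons_erase hm]

theorem exists_max {M : Multiset ℕ} (h : M ≠ 0) : ∃ m ∈ M, ∀ x ∈ M, x ≤ m := by
  induction M using Multiset.induction with
  | empty => exact absurd rfl h
  | cons a s ih =>
    rcases eq_or_ne s 0 with rfl | hs
    · exact ⟨a, by simp⟩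
    · obtain ⟨m, hm, hmax⟩ := ih hs
      rcases le_total a m with hh | hh
      · exact ⟨m, Multiset.mem_cons_of_mem hm, by
          intro x hx; rcases Multiset.mem_cons.mp hx with rfl | hx
          · exact hh
          · exact hmax x hx⟩
      · exact ⟨a, Multiset.mem_cons_self a s, by
          intro x hx; rcases Multiset.mem_cons.mp hx with rfl | hx
          · exact le_rfl
          · exact (hmax x hx).trans hh⟩

/-- the key lex lemma -/
theorem lexGL : ∀ (M A B : Multiset ℕ) (p : ℕ), (∀ x ∈ A, x < p) → p ∈ B →
    List.Lex (· < ·) (sd (M + A)) (sd (M + B)) := by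
  intro M
  induction M using Multiset.strongInductionOn with
  | ih M ih =>
    intro A B p hA hB
    have hMB : M + B ≠ 0 := by
      intro h
      have : p ∈ M + B := Multiset.mem_add.mpr (Or.inr hB)
      rw [h] at this; simp at this
    obtain ⟨m2, hm2, hmax2⟩ := exists_max hMB
    rw [sd_cons_max hm2 hmax2]
    rcases eq_or_ne (M + A) 0 with hz | hnz
    · rw [hz, sd_zero]; exact List.Lex.nil
    obtain ⟨m1, hm1, hmax1⟩ := exists_max hnz
    rw [sd_cons_max hm1 hmax1]
    have hm1le : m1 ≤ m2 := by
      rcases Multiset.mem_add.mp hm1 with h | h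
      · exact hmax2 m1 (Multiset.mem_add.mpr (Or.inl h))
      · exact le_of_lt (lt_of_lt_of_le (hA m1 h) (hmax2 p (Multiset.mem_add.mpr (Or.inr hB))))
    rcases lt_or_eq_of_le hm1le with hlt | heq
    · exact List.Lex.rel hlt
    subst heq
    have hm1M : m1 ∈ M := by
      rcases Multiset.mem_add.mp hm1 with h | h
      · exact h
      · exact absurd (hA m1 h) (by
          have := hmax2 p (Multiset.mem_add.mpr (Or.inr hB)); omega)
    have e1 : (M + A).erase m1 = M.erase m1 + A := by
      rw [Multiset.erase_add_left_pos _ hm1M]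
    have e2 : (M + B).erase m1 = M.erase m1 + B := by
      rw [Multiset.erase_add_left_pos _ hm1M]
    rw [e1, e2]
    exact List.Lex.cons (ih (M.erase m1) ((Multiset.erase_lt.mpr hm1M)) A B p hA hB)


theorem lam_eq_sd {n : ℕ} (d : Fin n →₀ ℕ) :
    lam d = sd (Multiset.filter (fun x => x ≠ 0) (Finset.univ.val.map fun t : Fin n => d t)) := rfl

theorem lam_perm {n : ℕ} (u : Equiv.Perm (Fin n)) (d : Fin n →₀ ℕ) :
    lam (Finsupp.mapDomain (⇑u) d) = lam d := by
  rw [lam_eq_sd, lam_eq_sd]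
  congr 1
  congr 1
  have h1 : (Finset.univ.val.map fun t : Fin n => Finsupp.mapDomain (⇑u) d t)
      = Finset.univ.val.map fun t : Fin n => d (u.symm t) := by
    apply Multiset.map_congr rfl
    intro t _
    exact Finsupp.mapDomain_equiv_apply d t
  rw [h1]
  have h2 : (Finset.univ.val.map fun t : Fin n => d (u.symm t))
      = (Finset.univ.val.map (⇑u.symm)).map d := by
    rw [Multiset.map_map]; rfl
  rw [h2]
  have h3 : Finset.univ.val.map (⇑u.symm) = Finset.univ.val := by
    have := Finset.map_univ_equiv (u.symm : Fin n ≃ Fin n)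
    calc Finset.univ.val.map ⇑u.symm = (Finset.map (u.symm).toEmbedding Finset.univ).val := rfl
      _ = Finset.univ.val := by rw [Finset.map_univ_equiv]
  rw [h3]

section DD
variable {n : ℕ} (a b : Fin n) (hab : a ≠ b) (d : Fin n →₀ ℕ)

theorem univ_decomp (hab : a ≠ b) : (Finset.univ : Finset (Fin n)).val =
    a ::ₘ b ::ₘ ((Finset.univ.erase a).erase b).val := by
  have h1 : ((Finset.univ.erase a).erase b).val = (Finset.univ.erase a).val.erase b := rfl
  have h2 : (Finset.univ.erase a).val = Finset.univ.val.erase a := rfl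
  rw [h1, h2, Multiset.cons_erase, Multiset.cons_erase (Finset.mem_univ a)]
  rw [← h2]
  exact Finset.mem_erase.mpr ⟨hab.symm, Finset.mem_univ b⟩

theorem lamD (hab : a ≠ b) (p q : ℕ) :
    lam ((d.update a p).update b q) =
      sd (Multiset.filter (fun x => x ≠ 0) (((Finset.univ.erase a).erase b).val.map fun t => d t)
        + Multiset.filter (fun x => x ≠ 0) {p, q}) := by
  rw [lam_eq_sd]
  congr 1
  rw [univ_decomp a b hab]
  rw [Multiset.map_cons, Multiset.map_cons]
  have ha : ((d.update a p).update b q) a = p := by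
    rw [Finsupp.coe_update, Function.update_of_ne hab, Finsupp.coe_update,
      Function.update_self]
  have hb : ((d.update a p).update b q) b = q := by
    rw [Finsupp.coe_update, Function.update_self]
  have hrest : (((Finset.univ.erase a).erase b).val.map fun t => ((d.update a p).update b q) t)
      = ((Finset.univ.erase a).erase b).val.map fun t => d t := by
    apply Multiset.map_congr rfl
    intro t ht
    have ht' := Finset.mem_erase.mp (Finset.mem_val.mp ht)
    have ht'' := Finset.mem_erase.mp ht'.2
    rw [Finsupp.coe_update, Function.update_of_ne ht'.1, Finsupp.coe_update,
      Function.update_of_ne ht''.1]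
  rw [ha, hb, hrest]
  have : ({p, q} : Multiset ℕ) = p ::ₘ q ::ₘ 0 := rfl
  rw [this]
  simp only [Multiset.filter_cons, Multiset.filter_add, Multiset.filter_zero, add_zero]
  abel


noncomputable def DD {n : ℕ} (d : Fin n →₀ ℕ) (a b : Fin n) (p q : ℕ) : Fin n →₀ ℕ :=
  (d.update a p).update b q

theorem DD_apply {n : ℕ} (d : Fin n →₀ ℕ) (a b : Fin n) (p q : ℕ) (t : Fin n) :
    DD d a b p q t = if t = b then q else if t = a then p else d t := by
  simp only [DD, Finsupp.coe_update, Function.update_apply]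

theorem DD_a {n : ℕ} (d : Fin n →₀ ℕ) {a b : Fin n} (hab : a ≠ b) (p q : ℕ) :
    DD d a b p q a = p := by simp [DD_apply, hab]

theorem DD_b {n : ℕ} (d : Fin n →₀ ℕ) (a b : Fin n) (p q : ℕ) :
    DD d a b p q b = q := by simp [DD_apply]

theorem DD_self {n : ℕ} (d : Fin n →₀ ℕ) (a b : Fin n) : DD d a b (d a) (d b) = d := by
  ext t; rw [DD_apply]; split_ifs with h1 h2 <;> first | (subst h1; rfl) | (subst h2; rfl) | rfl

theorem DD_DD {n : ℕ} (d : Fin n →₀ ℕ) (a b : Fin n) (p0 q0 p q : ℕ) :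
    DD (DD d a b p0 q0) a b p q = DD d a b p q := by
  ext t; rw [DD_apply, DD_apply]
  split_ifs with h1 h2
  · subst h1; rw [DD_b]
  · subst h2; rw [DD_apply, if_neg h1, if_pos rfl]
  · rw [DD_apply, if_neg h1, if_neg h2]

theorem single_add_DD_left {n : ℕ} (d : Fin n →₀ ℕ) {a b : Fin n} (hab : a ≠ b) (p q : ℕ) :
    Finsupp.single a 1 + DD d a b p q = DD d a b (p + 1) q := by
  ext t
  rw [Finsupp.add_apply, Finsupp.single_apply, DD_apply, DD_apply]
  rcases eq_or_ne t b with rfl | h1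
  · rw [if_pos rfl, if_pos rfl, if_neg hab, zero_add]
  rcases eq_or_ne t a with rfl | h2
  · rw [if_neg h1, if_neg h1, if_pos rfl, if_pos rfl, if_pos rfl, add_comm]
  · rw [if_neg h1, if_neg h1, if_neg h2, if_neg h2, if_neg (fun h => h2 h.symm), zero_add]

theorem single_add_DD_right {n : ℕ} (d : Fin n →₀ ℕ) {a b : Fin n} (hab : a ≠ b) (p q : ℕ) :
    Finsupp.single b 1 + DD d a b p q = DD d a b p (q + 1) := by
  ext t
  rw [Finsupp.add_apply, Finsupp.single_apply, DD_apply, DD_apply]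
  rcases eq_or_ne t b with rfl | h1
  · rw [if_pos rfl, if_pos rfl, if_pos rfl, add_comm]
  rcases eq_or_ne t a with rfl | h2
  · rw [if_neg h1, if_neg h1]
    simp only [if_pos rfl]
    rw [if_neg (fun h => hab h.symm), zero_add]
  · rw [if_neg h1, if_neg h1]
    simp only [if_neg h2]
    rw [if_neg (fun h => h1 h.symm), zero_add]

theorem mapDomain_swap {n : ℕ} (d : Fin n →₀ ℕ) {a b : Fin n} (hab : a ≠ b) (p q : ℕ) :
    Finsupp.mapDomain (⇑(Equiv.swap a b)) (DD d a b p q) = DD d a b q p := by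
  ext t
  rw [Finsupp.mapDomain_equiv_apply, Equiv.symm_swap]
  rcases eq_or_ne t a with rfl | ha
  · rw [Equiv.swap_apply_left, DD_b, DD_a d hab]
  rcases eq_or_ne t b with rfl | hb
  · rw [Equiv.swap_apply_right, DD_a d hab, DD_b]
  · rw [Equiv.swap_apply_of_ne_of_ne ha hb, DD_apply, DD_apply, if_neg hb, if_neg hb,
      if_neg ha, if_neg ha]

theorem mapDomain_swap_self {n : ℕ} (d : Fin n →₀ ℕ) {a b : Fin n} (hab : a ≠ b) :
    Finsupp.mapDomain (⇑(Equiv.swap a b)) d = DD d a b (d b) (d a) := by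
  conv_lhs => rw [← DD_self d a b]
  rw [mapDomain_swap d hab]


theorem sswap_eq {n i : ℕ} (hi : 1 ≤ i) (hin : i < n) :
    sswap n i = Equiv.swap ⟨i - 1, by omega⟩ ⟨i, hin⟩ := dif_pos ⟨hi, hin⟩

section Dem
variable {F : Type*} [Field F] {n : ℕ}

theorem X_sub_X_ne {a b : Fin n} (hab : a ≠ b) : (X a - X b : MvPolynomial (Fin n) F) ≠ 0 :=
  sub_ne_zero.mpr (fun h => hab (MvPolynomial.X_injective h))

theorem X_mul_mon (a : Fin n) (e : Fin n →₀ ℕ) :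
    (X a : MvPolynomial (Fin n) F) * monomial e 1 = monomial (Finsupp.single a 1 + e) 1 := by
  rw [MvPolynomial.X, monomial_mul, one_mul]

def IsDem (dem : ℕ → Module.End F (MvPolynomial (Fin n) F)) : Prop :=
  ∀ i, 1 ≤ i → ∀ hin : i < n, ∀ f,
      (X (⟨i - 1, Nat.lt_of_le_of_lt (Nat.sub_le i 1) hin⟩ : Fin n) - X (⟨i, hin⟩ : Fin n)) * dem i f =
        X (⟨i - 1, Nat.lt_of_le_of_lt (Nat.sub_le i 1) hin⟩ : Fin n) * f -
          X (⟨i, hin⟩ : Fin n) * (rename (⇑(sswap n i)) f)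

variable (dem : ℕ → Module.End F (MvPolynomial (Fin n) F))

theorem demf (hdem : IsDem dem) (i : ℕ) (hi : 1 ≤ i) (hin : i < n) (d : Fin n →₀ ℕ)
    (hpq : d ⟨i, hin⟩ ≤ d ⟨i - 1, by omega⟩) :
    dem i (monomial d 1) =
      ∑ j ∈ Finset.range (d ⟨i - 1, by omega⟩ - d ⟨i, hin⟩ + 1),
        monomial (DD d ⟨i - 1, by omega⟩ ⟨i, hin⟩ (d ⟨i, hin⟩ + j) (d ⟨i - 1, by omega⟩ - j)) 1 := by
  set a : Fin n := ⟨i - 1, by omega⟩ with ha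
  set b : Fin n := ⟨i, hin⟩ with hb
  have hab : a ≠ b := by
    intro h
    have := congrArg Fin.val h
    simp [ha, hb] at this
    omega
  apply mul_left_cancel₀ (X_sub_X_ne hab (F := F))
  rw [hdem i hi hin, rename_monomial, sswap_eq hi hin, ← ha, ← hb, mapDomain_swap_self d hab]
  set p := d a with hp
  set q := d b with hq
  set Ffun : ℕ → MvPolynomial (Fin n) F := fun j => monomial (DD d a b (q + j) (p + 1 - j)) 1
    with hF
  have key : ∀ j ∈ Finset.range (p - q + 1),
      (X a - X b) * monomial (DD d a b (q + j) (p - j)) (1 : F) = Ffun (j + 1) - Ffun j := by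
    intro j hj
    have hj' : j ≤ p - q := Nat.lt_succ_iff.mp (Finset.mem_range.mp hj)
    show _ = monomial (DD d a b (q + (j + 1)) (p + 1 - (j + 1))) (1 : F)
      - monomial (DD d a b (q + j) (p + 1 - j)) (1 : F)
    rw [sub_mul, X_mul_mon, X_mul_mon, single_add_DD_left d hab, single_add_DD_right d hab]
    have e1 : q + j + 1 = q + (j + 1) := by omega
    have e2 : p - j = p + 1 - (j + 1) := by omega
    have e3 : p - j + 1 = p + 1 - j := by omega
    rw [e3, e2, e1]
  rw [Finset.mul_sum, Finset.sum_congr rfl key, Finset.sum_range_sub Ffun]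
  have eF1 : Ffun (p - q + 1) = monomial (DD d a b (p + 1) q) (1 : F) := by
    show monomial (DD d a b (q + (p - q + 1)) (p + 1 - (p - q + 1))) (1 : F) = _
    have e1 : q + (p - q + 1) = p + 1 := by omega
    have e2 : p + 1 - (p - q + 1) = q := by omega
    rw [e1, e2]
  have eF0 : Ffun 0 = monomial (DD d a b q (p + 1)) (1 : F) := by
    show monomial (DD d a b (q + 0) (p + 1 - 0)) (1 : F) = _
    norm_num
  have hXa : (X a : MvPolynomial (Fin n) F) * monomial d 1 = monomial (DD d a b (p + 1) q) 1 := by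
    conv_lhs => rw [← DD_self d a b]
    rw [X_mul_mon, single_add_DD_left d hab, ← hp, ← hq]
  have hXb : (X b : MvPolynomial (Fin n) F) * monomial (DD d a b q p) 1
      = monomial (DD d a b q (p + 1)) 1 := by
    rw [X_mul_mon, single_add_DD_right d hab]
  rw [eF1, eF0, hXa, hXb]

theorem demrefl (hdem : IsDem dem) (i : ℕ) (hi : 1 ≤ i) (hin : i < n) (f : MvPolynomial (Fin n) F) :
    dem i f + dem i (rename (⇑(sswap n i)) f) = f + rename (⇑(sswap n i)) f := by
  have hab : (⟨i - 1, by omega⟩ : Fin n) ≠ ⟨i, hin⟩ := by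
    intro h
    have := congrArg Fin.val h
    simp at this
    omega
  have hinv : ∀ g : MvPolynomial (Fin n) F, rename (⇑(sswap n i)) (rename (⇑(sswap n i)) g) = g := by
    intro g
    rw [rename_rename]
    have : (⇑(sswap n i) ∘ ⇑(sswap n i)) = id := by
      funext t
      simp [sswap_eq hi hin, Equiv.swap_apply_self]
    rw [this]
    rw [rename_id]; rfl
  apply mul_left_cancel₀ (X_sub_X_ne hab (F := F))
  rw [mul_add, hdem i hi hin, hdem i hi hin, hinv, mul_add]
  ring

theorem demf2 (hdem : IsDem dem) (i : ℕ) (hi : 1 ≤ i) (hin : i < n) (d : Fin n →₀ ℕ)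
    (hpq : d ⟨i - 1, by omega⟩ < d ⟨i, hin⟩) :
    dem i (monomial d 1) =
      monomial d 1 + monomial (DD d ⟨i - 1, by omega⟩ ⟨i, hin⟩ (d ⟨i, hin⟩) (d ⟨i - 1, by omega⟩)) 1
        - ∑ j ∈ Finset.range (d ⟨i, hin⟩ - d ⟨i - 1, by omega⟩ + 1),
            monomial (DD d ⟨i - 1, by omega⟩ ⟨i, hin⟩ (d ⟨i - 1, by omega⟩ + j) (d ⟨i, hin⟩ - j)) 1 := by
  set a : Fin n := ⟨i - 1, by omega⟩ with ha
  set b : Fin n := ⟨i, hin⟩ with hb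
  have hab : a ≠ b := by
    intro h
    have := congrArg Fin.val h
    simp [ha, hb] at this
    omega
  set d2 := DD d a b (d b) (d a) with hd2
  have hren : rename (⇑(sswap n i)) (monomial d2 1) = (monomial d 1 : MvPolynomial (Fin n) F) := by
    rw [rename_monomial, sswap_eq hi hin, ← ha, ← hb, hd2, mapDomain_swap d hab, DD_self]
  have hrefl := demrefl dem hdem i hi hin (monomial d2 1)
  rw [hren] at hrefl
  have h2a : d2 a = d b := DD_a d hab _ _
  have h2b : d2 b = d a := DD_b d a b _ _
  have hle : d2 b ≤ d2 a := by rw [h2a, h2b]; exact le_of_lt hpq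
  have hd2f := demf dem hdem i hi hin d2 (by rw [← ha, ← hb]; exact hle)
  rw [← ha, ← hb] at hd2f
  rw [h2a, h2b] at hd2f
  have hDD : ∀ u v : ℕ, DD d2 a b u v = DD d a b u v := fun u v => DD_DD d a b _ _ u v
  have hsum : (∑ j ∈ Finset.range (d b - d a + 1), monomial (DD d2 a b (d a + j) (d b - j)) (1 : F))
      = ∑ j ∈ Finset.range (d b - d a + 1), monomial (DD d a b (d a + j) (d b - j)) (1 : F) := by
    apply Finset.sum_congr rfl
    intro j _
    rw [hDD]
  rw [hsum] at hd2f
  -- hrefl : dem i (monomial d2 1) + dem i (monomial d 1) = monomial d2 1 + monomial d 1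
  rw [hd2f] at hrefl
  linear_combination hrefl
end Dem


def InvSet {n : ℕ} (u : Equiv.Perm (Fin n)) : Finset (Fin n × Fin n) :=
  Finset.univ.filter (fun p => p.1 < p.2 ∧ u p.2 < u p.1)

theorem mem_InvSet {n : ℕ} {u : Equiv.Perm (Fin n)} {pr : Fin n × Fin n} :
    pr ∈ InvSet u ↔ pr.1 < pr.2 ∧ u pr.2 < u pr.1 := by simp [InvSet]

theorem invNum_eq {n : ℕ} (u : Equiv.Perm (Fin n)) : invNum u = (InvSet u).card := rfl

section Swapstep
variable {n : ℕ} (a b : Fin n) (hb : (b : ℕ) = (a : ℕ) + 1) (u : Equiv.Perm (Fin n))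
include hb

theorem swapstep (z t : Fin n) (hzt : z < t) :
    ((Equiv.swap a b * u) t < (Equiv.swap a b * u) z ↔
      (if (u z = a ∧ u t = b) ∨ (u z = b ∧ u t = a) then u z < u t else u t < u z)) := by
  have hab : a ≠ b := Fin.ne_of_val_ne (by omega)
  have hinj : u z ≠ u t := fun h => (ne_of_lt hzt) (u.injective h)
  simp only [Equiv.Perm.mul_apply]
  rcases eq_or_ne (u z) a with hza | hza
  · rcases eq_or_ne (u t) b with htb | htb
    · rw [if_pos (Or.inl ⟨hza, htb⟩), hza, htb, Equiv.swap_apply_left, Equiv.swap_apply_right]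
    · have hta : u t ≠ a := fun h => hinj (hza.trans h.symm)
      have hcond : ¬((u z = a ∧ u t = b) ∨ (u z = b ∧ u t = a)) := by
        rintro (⟨h1, h2⟩ | ⟨h1, h2⟩)
        · exact htb h2
        · exact hab (hza.symm.trans h1)
      rw [if_neg hcond, hza, Equiv.swap_apply_left, Equiv.swap_apply_of_ne_of_ne hta htb]
      have h1 : (u t : ℕ) ≠ (a : ℕ) := fun hh => hta (Fin.ext hh)
      have h2 : (u t : ℕ) ≠ (b : ℕ) := fun hh => htb (Fin.ext hh)
      rw [Fin.lt_def, Fin.lt_def]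
      omega
  · rcases eq_or_ne (u z) b with hzb | hzb
    · rcases eq_or_ne (u t) a with hta | hta
      · rw [if_pos (Or.inr ⟨hzb, hta⟩), hzb, hta, Equiv.swap_apply_left, Equiv.swap_apply_right]
      · have htb : u t ≠ b := fun h => hinj (hzb.trans h.symm)
        have hcond : ¬((u z = a ∧ u t = b) ∨ (u z = b ∧ u t = a)) := by
          rintro (⟨h1, h2⟩ | ⟨h1, h2⟩)
          · exact hab (h1.symm.trans hzb)
          · exact hta h2
        rw [if_neg hcond, hzb, Equiv.swap_apply_right, Equiv.swap_apply_of_ne_of_ne hta htb]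
        have h1 : (u t : ℕ) ≠ (a : ℕ) := fun hh => hta (Fin.ext hh)
        have h2 : (u t : ℕ) ≠ (b : ℕ) := fun hh => htb (Fin.ext hh)
        rw [Fin.lt_def, Fin.lt_def]
        omega
    · rw [Equiv.swap_apply_of_ne_of_ne hza hzb]
      have h1 : (u z : ℕ) ≠ (a : ℕ) := fun hh => hza (Fin.ext hh)
      have h2 : (u z : ℕ) ≠ (b : ℕ) := fun hh => hzb (Fin.ext hh)
      rcases eq_or_ne (u t) a with hta | hta
      · have hcond : ¬((u z = a ∧ u t = b) ∨ (u z = b ∧ u t = a)) := by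
          rintro (⟨h3, h4⟩ | ⟨h3, h4⟩)
          · exact hza h3
          · exact hzb h3
        rw [if_neg hcond, hta, Equiv.swap_apply_left, Fin.lt_def, Fin.lt_def]
        omega
      rcases eq_or_ne (u t) b with htb | htb
      · have hcond : ¬((u z = a ∧ u t = b) ∨ (u z = b ∧ u t = a)) := by
          rintro (⟨h3, h4⟩ | ⟨h3, h4⟩)
          · exact hza h3
          · exact hzb h3
        rw [if_neg hcond, htb, Equiv.swap_apply_right, Fin.lt_def, Fin.lt_def]
        omega
      · have hcond : ¬((u z = a ∧ u t = b) ∨ (u z = b ∧ u t = a)) := by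
          rintro (⟨h3, h4⟩ | ⟨h3, h4⟩)
          · exact hza h3
          · exact hzb h3
        rw [if_neg hcond, Equiv.swap_apply_of_ne_of_ne hta htb]

theorem invstep_lt (hxy : u.symm a < u.symm b) :
    (u.symm a, u.symm b) ∉ InvSet u ∧
      InvSet (Equiv.swap a b * u) = insert (u.symm a, u.symm b) (InvSet u) := by
  have hab : a ≠ b := Fin.ne_of_val_ne (by omega)
  constructor
  · rw [mem_InvSet]
    rintro ⟨-, hlt⟩
    simp only [Equiv.apply_symm_apply] at hlt
    rw [Fin.lt_def] at hlt
    omega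
  · ext ⟨z, t⟩
    rw [mem_InvSet, Finset.mem_insert, mem_InvSet]
    simp only
    constructor
    · rintro ⟨h1, h2⟩
      rw [swapstep a b hb u z t h1] at h2
      by_cases hc : (u z = a ∧ u t = b) ∨ (u z = b ∧ u t = a)
      · rw [if_pos hc] at h2
        rcases hc with ⟨h3, h4⟩ | ⟨h3, h4⟩
        · left
          rw [Prod.mk.injEq]
          constructor
          · rw [← h3, Equiv.symm_apply_apply]
          · rw [← h4, Equiv.symm_apply_apply]
        · exfalso
          have hz : z = u.symm b := by rw [← h3, Equiv.symm_apply_apply]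
          have ht : t = u.symm a := by rw [← h4, Equiv.symm_apply_apply]
          rw [hz, ht] at h1
          exact absurd hxy (asymm h1)
      · rw [if_neg hc] at h2
        exact Or.inr ⟨h1, h2⟩
    · rintro (heq | ⟨h1, h2⟩)
      · rw [Prod.mk.injEq] at heq
        obtain ⟨rfl, rfl⟩ := heq
        refine ⟨hxy, ?_⟩
        simp only [Equiv.Perm.mul_apply, Equiv.apply_symm_apply, Equiv.swap_apply_left,
          Equiv.swap_apply_right]
        rw [Fin.lt_def]
        omega
      · refine ⟨h1, ?_⟩
        rw [swapstep a b hb u z t h1]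
        by_cases hc : (u z = a ∧ u t = b) ∨ (u z = b ∧ u t = a)
        · rw [if_pos hc]
          rcases hc with ⟨h3, h4⟩ | ⟨h3, h4⟩
          · exfalso
            rw [h3, h4, Fin.lt_def] at h2
            omega
          · exfalso
            have hz : z = u.symm b := by rw [← h3, Equiv.symm_apply_apply]
            have ht : t = u.symm a := by rw [← h4, Equiv.symm_apply_apply]
            rw [hz, ht] at h1
            exact absurd hxy (asymm h1)
        · rw [if_neg hc]
          exact h2

theorem invstep_gt (hxy : u.symm b < u.symm a) :
    (u.symm b, u.symm a) ∈ InvSet u ∧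
      InvSet (Equiv.swap a b * u) = (InvSet u).erase (u.symm b, u.symm a) := by
  have hab : a ≠ b := Fin.ne_of_val_ne (by omega)
  constructor
  · rw [mem_InvSet]
    refine ⟨hxy, ?_⟩
    simp only [Equiv.apply_symm_apply]
    rw [Fin.lt_def]
    omega
  · ext ⟨z, t⟩
    rw [mem_InvSet, Finset.mem_erase, mem_InvSet]
    simp only
    constructor
    · rintro ⟨h1, h2⟩
      rw [swapstep a b hb u z t h1] at h2
      by_cases hc : (u z = a ∧ u t = b) ∨ (u z = b ∧ u t = a)
      · exfalso
        rw [if_pos hc] at h2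
        rcases hc with ⟨h3, h4⟩ | ⟨h3, h4⟩
        · have hz : z = u.symm a := by rw [← h3, Equiv.symm_apply_apply]
          have ht : t = u.symm b := by rw [← h4, Equiv.symm_apply_apply]
          rw [hz, ht] at h1
          exact absurd hxy (asymm h1)
        · rw [h3, h4, Fin.lt_def] at h2
          omega
      · rw [if_neg hc] at h2
        refine ⟨?_, h1, h2⟩
        intro heq
        rw [Prod.mk.injEq] at heq
        obtain ⟨rfl, rfl⟩ := heq
        exact hc (Or.inr ⟨Equiv.apply_symm_apply u b, Equiv.apply_symm_apply u a⟩)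
    · rintro ⟨hne, h1, h2⟩
      refine ⟨h1, ?_⟩
      rw [swapstep a b hb u z t h1]
      by_cases hc : (u z = a ∧ u t = b) ∨ (u z = b ∧ u t = a)
      · rcases hc with ⟨h3, h4⟩ | ⟨h3, h4⟩
        · exfalso
          have hz : z = u.symm a := by rw [← h3, Equiv.symm_apply_apply]
          have ht : t = u.symm b := by rw [← h4, Equiv.symm_apply_apply]
          rw [hz, ht] at h1
          exact absurd hxy (asymm h1)
        · exfalso
          apply hne
          rw [Prod.mk.injEq]
          constructor
          · rw [← h3, Equiv.symm_apply_apply]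
          · rw [← h4, Equiv.symm_apply_apply]
      · rw [if_neg hc]
        exact h2

theorem invnum_swap_le : invNum (Equiv.swap a b * u) ≤ invNum u + 1 := by
  have hab : a ≠ b := Fin.ne_of_val_ne (by omega)
  have hne : u.symm a ≠ u.symm b := fun h => hab (u.symm.injective h)
  rcases lt_or_gt_of_ne hne with h | h
  · obtain ⟨hmem, heq⟩ := invstep_lt a b hb u h
    rw [invNum_eq, invNum_eq, heq, Finset.card_insert_of_notMem hmem]
  · obtain ⟨hmem, heq⟩ := invstep_gt a b hb u h
    rw [invNum_eq, invNum_eq, heq, Finset.card_erase_of_mem hmem]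
    omega

theorem invnum_succ_lt (hsucc : invNum (Equiv.swap a b * u) = invNum u + 1) :
    u.symm a < u.symm b := by
  have hab : a ≠ b := Fin.ne_of_val_ne (by omega)
  have hne : u.symm a ≠ u.symm b := fun h => hab (u.symm.injective h)
  rcases lt_or_gt_of_ne hne with h | h
  · exact h
  · exfalso
    obtain ⟨hmem, heq⟩ := invstep_gt a b hb u h
    rw [invNum_eq, invNum_eq, heq, Finset.card_erase_of_mem hmem] at hsucc
    have : 1 ≤ (InvSet u).card := Finset.card_pos.mpr ⟨_, hmem⟩
    omega
end Swapstep

theorem desc_exists {n : ℕ} (w : Equiv.Perm (Fin n)) :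
    ∀ k (z t : Fin n), t.val - z.val = k → z < t → w t < w z →
      ∃ m : ℕ, z.val ≤ m ∧ m < t.val ∧ (m + 1) ∈ permDes n w := by
  intro k
  induction k using Nat.strong_induction_on with
  | _ k ih =>
    intro z t hk hzt hw
    have hzt' : z.val < t.val := hzt
    have hz1 : z.val + 1 < n := lt_of_le_of_lt (by omega) t.isLt
    set z' : Fin n := ⟨z.val + 1, hz1⟩ with hz'
    have hzz' : z ≠ z' := by
      intro h
      have := congrArg Fin.val h
      simp [hz'] at this
    have hwzz' : w z ≠ w z' := fun h => hzz' (w.injective h)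
    rcases lt_or_ge (w z') (w z) with hd | hd
    · refine ⟨z.val, le_refl _, hzt', ?_⟩
      rw [permDes, Finset.mem_filter, Finset.mem_Icc]
      refine ⟨⟨by omega, by omega⟩, ?_⟩
      rw [valAt, valAt]
      rw [dif_pos (show z.val + 1 + 1 - 1 < n by omega), dif_pos (show z.val + 1 - 1 < n by omega)]
      have e1 : (⟨z.val + 1 + 1 - 1, by omega⟩ : Fin n) = z' := by
        apply Fin.ext; simp [hz']
      have e2 : (⟨z.val + 1 - 1, by omega⟩ : Fin n) = z := by
        apply Fin.ext; simp
      rw [e1, e2]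
      exact hd
    · have hd' : w z < w z' := lt_of_le_of_ne hd hwzz'
      have hz't : z' ≠ t := by
        intro h
        rw [← h] at hw
        exact absurd (lt_trans hw hd') (lt_irrefl _)
      have hz'lt : z' < t := by
        rw [Fin.lt_def]
        have : z'.val ≤ t.val := by show z.val + 1 ≤ t.val; omega
        rcases lt_or_eq_of_le this with h | h
        · exact h
        · exact absurd (Fin.ext h) hz't
      obtain ⟨m, hm1, hm2, hm3⟩ := ih (t.val - z'.val) (by simp [hz']; omega) z' t rfl hz'lt
        (lt_trans hw hd')
      exact ⟨m, by simp [hz'] at hm1; omega, hm2, hm3⟩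


section Supp
variable {F : Type*} [Field F] {n : ℕ} (dem : ℕ → Module.End F (MvPolynomial (Fin n) F))

theorem demf' (hdem : IsDem dem) (i : ℕ) (hi : 1 ≤ i) (hin : i < n) (a b : Fin n)
    (hva : (a : ℕ) = i - 1) (hvb : (b : ℕ) = i) (d : Fin n →₀ ℕ) (hpq : d b ≤ d a) :
    dem i (monomial d 1) = ∑ j ∈ Finset.range (d a - d b + 1),
      monomial (DD d a b (d b + j) (d a - j)) 1 := by
  obtain rfl : a = ⟨i - 1, Nat.lt_of_le_of_lt (Nat.sub_le i 1) hin⟩ := Fin.ext hva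
  obtain rfl : b = ⟨i, hin⟩ := Fin.ext hvb
  exact demf dem hdem i hi hin d hpq

theorem demf2' (hdem : IsDem dem) (i : ℕ) (hi : 1 ≤ i) (hin : i < n) (a b : Fin n)
    (hva : (a : ℕ) = i - 1) (hvb : (b : ℕ) = i) (d : Fin n →₀ ℕ) (hpq : d a < d b) :
    dem i (monomial d 1) =
      monomial d 1 + monomial (DD d a b (d b) (d a)) 1
        - ∑ j ∈ Finset.range (d b - d a + 1), monomial (DD d a b (d a + j) (d b - j)) 1 := by
  obtain rfl : a = ⟨i - 1, Nat.lt_of_le_of_lt (Nat.sub_le i 1) hin⟩ := Fin.ext hva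
  obtain rfl : b = ⟨i, hin⟩ := Fin.ext hvb
  exact demf2 dem hdem i hi hin d hpq

theorem lamDD {a b : Fin n} (hab : a ≠ b) (d : Fin n →₀ ℕ) (p q : ℕ) :
    lam (DD d a b p q) =
      sd (Multiset.filter (fun x => x ≠ 0) (((Finset.univ.erase a).erase b).val.map fun t => d t)
        + Multiset.filter (fun x => x ≠ 0) {p, q}) :=
  lamD a b d hab p q

theorem lam_DD_comm {a b : Fin n} (hab : a ≠ b) (d : Fin n →₀ ℕ) (p q : ℕ) :
    lam (DD d a b q p) = lam (DD d a b p q) := by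
  rw [lamDD hab, lamDD hab, Multiset.pair_comm]

theorem lam_DD_lt {a b : Fin n} (hab : a ≠ b) (d : Fin n →₀ ℕ) {p q x y : ℕ}
    (hx1 : q < x) (hx2 : x < p) (hy1 : q < y) (hy2 : y < p) :
    List.Lex (· < ·) (lam (DD d a b x y)) (lam (DD d a b p q)) := by
  rw [lamDD hab, lamDD hab]
  have hA : Multiset.filter (fun t => t ≠ 0) ({x, y} : Multiset ℕ) = {x, y} := by
    rw [Multiset.filter_eq_self]
    intro t ht
    rw [Multiset.insert_eq_cons, Multiset.mem_cons, Multiset.mem_singleton] at ht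
    rcases ht with rfl | rfl <;> omega
  rw [hA]
  apply lexGL _ _ _ p
  · intro t ht
    rw [Multiset.insert_eq_cons, Multiset.mem_cons, Multiset.mem_singleton] at ht
    rcases ht with rfl | rfl <;> omega
  · rw [Multiset.mem_filter]
    exact ⟨by rw [Multiset.insert_eq_cons]; exact Multiset.mem_cons_self _ _, by omega⟩

theorem mem_support_monomial {F : Type*} [Field F] {n : ℕ} {e s : Fin n →₀ ℕ}
    (h : e ∈ (monomial s (1 : F)).support) : e = s := by
  classical
  rw [MvPolynomial.support_monomial] at h
  simpa using h

theorem supp_pibar (hdem : IsDem dem) (i : ℕ) (hi : 1 ≤ i) (hin : i < n) (a b : Fin n)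
    (hva : (a : ℕ) = i - 1) (hvb : (b : ℕ) = i) (d : Fin n →₀ ℕ) (c : F) :
    ∀ e ∈ ((dem i - 1) (monomial d c)).support,
      lam e = lam d ∨ List.Lex (· < ·) (lam e) (lam d) := by
  have hab : a ≠ b := Fin.ne_of_val_ne (by omega)
  have happ : ∀ f : MvPolynomial (Fin n) F, (dem i - 1) f = dem i f - f := by
    intro f
    rw [LinearMap.sub_apply, Module.End.one_apply]
  intro e he
  have hmc : (monomial d c : MvPolynomial (Fin n) F) = c • monomial d 1 := by
    rw [MvPolynomial.smul_monomial, smul_eq_mul, mul_one]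
  have hlin : (dem i - 1) (monomial d c) = c • ((dem i - 1) (monomial d (1 : F))) := by
    rw [hmc, map_smul]
  rw [hlin] at he
  have he' : e ∈ ((dem i - 1) (monomial d (1 : F))).support := MvPolynomial.support_smul he
  rcases le_or_gt (d b) (d a) with hle | hlt
  · have hform := demf' dem hdem i hi hin a b hva hvb d hle
    have hsub : (dem i - 1) (monomial d (1 : F)) =
        (∑ j ∈ Finset.range (d a - d b + 1), monomial (DD d a b (d b + j) (d a - j)) (1 : F))
          - monomial d 1 := by
      rw [happ, hform]
    rw [hsub] at he'
    rcases Finset.mem_union.mp (MvPolynomial.support_sub _ _ _ he') with hmem | hmem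
    · obtain ⟨j, hj, hej⟩ := Finset.mem_biUnion.mp (MvPolynomial.support_sum hmem)
      have hj' : j ≤ d a - d b := Nat.lt_succ_iff.mp (Finset.mem_range.mp hj)
      have hej2 := mem_support_monomial hej
      subst hej2
      by_cases hj0 : j = 0
      · subst hj0
        left
        rw [Nat.add_zero, Nat.sub_zero, lam_DD_comm hab]
        rw [DD_self]
      by_cases hjk : j = d a - d b
      · subst hjk
        left
        have e1 : d b + (d a - d b) = d a := by omega
        have e2 : d a - (d a - d b) = d b := by omega
        rw [e1, e2, DD_self]
      · right
        rw [show lam d = lam (DD d a b (d a) (d b)) from by rw [DD_self]]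
        exact lam_DD_lt hab d (by omega) (by omega) (by omega) (by omega)
    · have hmem2 := mem_support_monomial hmem
      subst hmem2
      exact Or.inl rfl
  · have hform := demf2' dem hdem i hi hin a b hva hvb d hlt
    have hsub : (dem i - 1) (monomial d (1 : F)) =
        monomial (DD d a b (d b) (d a)) 1
          - ∑ j ∈ Finset.range (d b - d a + 1), monomial (DD d a b (d a + j) (d b - j)) (1 : F) := by
      rw [happ, hform]
      ring
    rw [hsub] at he'
    rcases Finset.mem_union.mp (MvPolynomial.support_sub _ _ _ he') with hmem | hmem
    · have hmem2 := mem_support_monomial hmem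
      subst hmem2
      left
      rw [lam_DD_comm hab, DD_self]
    · obtain ⟨j, hj, hej⟩ := Finset.mem_biUnion.mp (MvPolynomial.support_sum hmem)
      have hj' : j ≤ d b - d a := Nat.lt_succ_iff.mp (Finset.mem_range.mp hj)
      have hej2 := mem_support_monomial hej
      subst hej2
      by_cases hj0 : j = 0
      · subst hj0
        left
        rw [Nat.add_zero, Nat.sub_zero, DD_self]
      by_cases hjk : j = d b - d a
      · subst hjk
        left
        have e1 : d a + (d b - d a) = d b := by omega
        have e2 : d b - (d b - d a) = d a := by omega
        rw [e1, e2, lam_DD_comm hab, DD_self]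
      · right
        rw [show lam d = lam (DD d a b (d b) (d a)) from by rw [lam_DD_comm hab, DD_self]]
        exact lam_DD_lt hab d (by omega) (by omega) (by omega) (by omega)

end Supp


section Supp2
variable {F : Type*} [Field F] {n : ℕ} (dem : ℕ → Module.End F (MvPolynomial (Fin n) F))

theorem supp_pibar_strict (hdem : IsDem dem) (i : ℕ) (hi : 1 ≤ i) (hin : i < n) (a b : Fin n)
    (hva : (a : ℕ) = i - 1) (hvb : (b : ℕ) = i) (d : Fin n →₀ ℕ) (hlt : d b < d a) :
    ∀ e ∈ ((dem i - 1) (monomial d (1 : F)) - monomial (DD d a b (d b) (d a)) 1).support,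
      List.Lex (· < ·) (lam e) (lam d) := by
  have hab : a ≠ b := Fin.ne_of_val_ne (by omega)
  have happ : (dem i - 1) (monomial d (1 : F)) = dem i (monomial d 1) - monomial d 1 := by
    rw [LinearMap.sub_apply, Module.End.one_apply]
  have hform := demf' dem hdem i hi hin a b hva hvb d (le_of_lt hlt)
  obtain ⟨k', hk'⟩ : ∃ k', d a - d b = k' + 1 := ⟨d a - d b - 1, by omega⟩
  have hexpr : (dem i - 1) (monomial d (1 : F)) - monomial (DD d a b (d b) (d a)) 1
      = ∑ j ∈ Finset.range k',
          monomial (DD d a b (d b + (j + 1)) (d a - (j + 1))) (1 : F) := by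
    rw [happ, hform, hk']
    rw [Finset.sum_range_succ, Finset.sum_range_succ']
    have e1 : (monomial (DD d a b (d b + (k' + 1)) (d a - (k' + 1))) (1 : F))
        = monomial d 1 := by
      have q1 : d b + (k' + 1) = d a := by omega
      have q2 : d a - (k' + 1) = d b := by omega
      rw [q1, q2, DD_self]
    have e2 : (monomial (DD d a b (d b + 0) (d a - 0)) (1 : F))
        = monomial (DD d a b (d b) (d a)) 1 := by
      rw [Nat.add_zero, Nat.sub_zero]
    rw [e1, e2]
    ring
  intro e he
  rw [hexpr] at he
  obtain ⟨j, hj, hej⟩ := Finset.mem_biUnion.mp (MvPolynomial.support_sum he)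
  have hj' : j < k' := Finset.mem_range.mp hj
  have hej2 := mem_support_monomial hej
  subst hej2
  rw [show lam d = lam (DD d a b (d a) (d b)) from by rw [DD_self]]
  exact lam_DD_lt hab d (by omega) (by omega) (by omega) (by omega)

theorem lower_closed (hdem : IsDem dem) (i : ℕ) (hi : 1 ≤ i) (hin : i < n) (a b : Fin n)
    (hva : (a : ℕ) = i - 1) (hvb : (b : ℕ) = i) (g : MvPolynomial (Fin n) F) (L : List ℕ)
    (hg : ∀ e ∈ g.support, List.Lex (· < ·) (lam e) L) :
    ∀ e ∈ ((dem i - 1) g).support, List.Lex (· < ·) (lam e) L := by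
  intro e he
  have hrepr : (dem i - 1) g
      = ∑ v ∈ g.support, (dem i - 1) (monomial v (MvPolynomial.coeff v g)) := by
    conv_lhs => rw [MvPolynomial.as_sum g]
    rw [map_sum]
  rw [hrepr] at he
  obtain ⟨v, hv, hev⟩ := Finset.mem_biUnion.mp (MvPolynomial.support_sum he)
  rcases supp_pibar dem hdem i hi hin a b hva hvb v _ e hev with heq | hlt
  · rw [heq]
    exact hg v hv
  · exact List.lex_trans (fun h1 h2 => lt_trans h1 h2) hlt (hg v hv)

end Supp2

noncomputable def eCF (n : ℕ) (C : Finset ℕ) : Fin n →₀ ℕ :=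
  Finsupp.equivFunOnFinite.symm (fun t : Fin n => (C.filter (fun c => (t : ℕ) < c)).card)

theorem eCF_apply (n : ℕ) (C : Finset ℕ) (t : Fin n) :
    eCF n C t = (C.filter (fun c => (t : ℕ) < c)).card := rfl

theorem eCF_strict {n : ℕ} (C : Finset ℕ) (z t : Fin n) (m : ℕ) (h1 : (z : ℕ) ≤ m)
    (h2 : m < (t : ℕ)) (hmC : m + 1 ∈ C) : eCF n C t < eCF n C z := by
  rw [eCF_apply, eCF_apply]
  apply Finset.card_lt_card
  constructor
  · intro c hc
    simp only [Finset.mem_filter] at hc ⊢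
    exact ⟨hc.1, by omega⟩
  · intro hcon
    have hmem : m + 1 ∈ C.filter (fun c => (z : ℕ) < c) := Finset.mem_filter.mpr ⟨hmC, by omega⟩
    have := Finset.mem_filter.mp (hcon hmem)
    omega

section XC
variable {F : Type*} [Field F]

theorem prodX {τ : Type*} {n : ℕ} (s : Finset τ) (g : τ → Fin n) :
    (∏ j ∈ s, X (g j) : MvPolynomial (Fin n) F)
      = monomial (∑ j ∈ s, Finsupp.single (g j) 1) 1 := by
  classical
  induction s using Finset.induction_on with
  | empty => simp [MvPolynomial.monomial_zero']
  | insert _ _ hx ih =>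
    rw [Finset.prod_insert hx, Finset.sum_insert hx, ih, X_mul_mon]

theorem prodMon {τ : Type*} {n : ℕ} (s : Finset τ) (h : τ → (Fin n →₀ ℕ)) :
    (∏ j ∈ s, monomial (h j) (1 : F)) = monomial (∑ j ∈ s, h j) 1 := by
  classical
  induction s using Finset.induction_on with
  | empty => simp [MvPolynomial.monomial_zero']
  | insert _ _ hx ih =>
    rw [Finset.prod_insert hx, Finset.sum_insert hx, ih, monomial_mul, one_mul]

theorem xC_monomial (n : ℕ) (hn : 1 ≤ n) (C : Finset ℕ) (hC : C ⊆ Finset.Icc 1 (n - 1)) :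
    xC F n C = monomial (eCF n C) 1 := by
  classical
  have hn' : 0 < n := hn
  set g : ℕ → Fin n := fun j => ⟨j % n, Nat.mod_lt j hn'⟩ with hg
  have hgj : ∀ j (hj : j < n), g j = ⟨j, hj⟩ := by
    intro j hj
    apply Fin.ext
    simp [hg, Nat.mod_eq_of_lt hj]
  have step1 : xC F n C = ∏ i ∈ C, monomial (∑ j ∈ Finset.range i, Finsupp.single (g j) 1) 1 := by
    rw [xC]
    apply Finset.prod_congr rfl
    intro i hiC
    have hile : i ≤ n - 1 := (Finset.mem_Icc.mp (hC hiC)).2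
    have hinner : (∏ j ∈ Finset.range i,
        (if h : j < n then (X (⟨j, h⟩ : Fin n) : MvPolynomial (Fin n) F) else 1))
        = ∏ j ∈ Finset.range i, X (g j) := by
      apply Finset.prod_congr rfl
      intro j hj
      have hjn : j < n := by
        have := Finset.mem_range.mp hj
        omega
      rw [dif_pos hjn, hgj j hjn]
    rw [hinner, prodX]
  rw [step1, prodMon]
  have hsum : (∑ i ∈ C, ∑ j ∈ Finset.range i, Finsupp.single (g j) 1) = eCF n C := by
    ext t
    rw [Finsupp.finset_sum_apply, eCF_apply]
    have hinner2 : ∀ i ∈ C, (∑ j ∈ Finset.range i, Finsupp.single (g j) 1) t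
        = if (t : ℕ) < i then 1 else 0 := by
      intro i hiC
      have hile : i ≤ n - 1 := (Finset.mem_Icc.mp (hC hiC)).2
      rw [Finsupp.finset_sum_apply]
      have : ∀ j ∈ Finset.range i, (Finsupp.single (g j) 1) t
          = if j = (t : ℕ) then 1 else 0 := by
        intro j hj
        have hjn : j < n := by
          have := Finset.mem_range.mp hj
          omega
        rw [Finsupp.single_apply, hgj j hjn]
        congr 1
        simp only [eq_iff_iff]
        constructor
        · intro h
          have := congrArg Fin.val h
          simp only [Fin.val_mk] at this
          omega
        · intro h
          apply Fin.ext
          simp [h]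
      rw [Finset.sum_congr rfl this, Finset.sum_ite_eq' (Finset.range i) (t : ℕ) (fun _ => 1)]
      simp [Finset.mem_range]
    rw [Finset.sum_congr rfl hinner2]
    rw [Finset.sum_boole]
    simp
  rw [hsum]

end XC

theorem invNum_one {n : ℕ} : invNum (1 : Equiv.Perm (Fin n)) = 0 := by
  rw [invNum_eq]
  convert Finset.card_empty
  ext ⟨z, t⟩
  simp only [mem_InvSet, Finset.notMem_empty, iff_false]
  rintro ⟨h1, h2⟩
  simp only [Equiv.Perm.coe_one, id_eq] at h2
  exact absurd h1 (asymm h2)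

theorem lenbound {n : ℕ} : ∀ r : List ℕ, (∀ i ∈ r, 1 ≤ i ∧ i < n) →
    invNum ((r.map (sswap n)).prod) ≤ r.length := by
  intro r
  induction r with
  | nil => simp [invNum_one]
  | cons i r' ih =>
    intro hv
    obtain ⟨hi1, hin⟩ := hv i List.mem_cons_self
    have hrest := ih (fun j hj => hv j (List.mem_cons_of_mem i hj))
    rw [List.map_cons, List.prod_cons, sswap_eq hi1 hin]
    have hb : ((⟨i, hin⟩ : Fin n) : ℕ) = ((⟨i - 1, by omega⟩ : Fin n) : ℕ) + 1 := by
      simp; omega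
    have := invnum_swap_le _ _ hb ((r'.map (sswap n)).prod)
    simp only [List.length_cons]
    omega

/-- triangularity of `π̄_c` acting on `x_C`.  If `Des(w) ⊆ C` and
`(i₁,…,i_k)` is a reduced word for `w`, then `π̄_{(i₁,…,i_k)}(x_C) − w·x_C` is a linear
combination of monomials `x^d` with `λ(d) <_lex λ(e_C)`, where `e_C` is the exponent
vector of `x_C`. -/
theorem stmt9 (F : Type*) [Field F] (n : ℕ) (hn : 1 ≤ n)
    (C : Finset ℕ) (hC : C ⊆ Finset.Icc 1 (n - 1))
    -- the Demazure operators, characterized by their defining property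
    (dem : ℕ → Module.End F (MvPolynomial (Fin n) F))
    (hdem : ∀ i, 1 ≤ i → ∀ hin : i < n, ∀ f,
      (X (⟨i - 1, by omega⟩ : Fin n) - X (⟨i, hin⟩ : Fin n)) * dem i f =
        X (⟨i - 1, by omega⟩ : Fin n) * f -
          X (⟨i, hin⟩ : Fin n) * (rename (⇑(sswap n i)) f))
    (w : Equiv.Perm (Fin n)) (hw : permDes n w ⊆ C)
    (rword : List ℕ) (hr1 : ∀ i ∈ rword, 1 ≤ i ∧ i < n)
    (hr2 : (rword.map (sswap n)).prod = w) (hr3 : rword.length = invNum w) :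
    ∀ d ∈ ((rword.map (fun i => dem i - 1)).prod (xC F n C) -
        rename (⇑w) (xC F n C)).support,
      ∀ e ∈ (xC F n C).support, List.Lex (· < ·) (lam d) (lam e) := by
  classical
  have hxc : xC F n C = monomial (eCF n C) 1 := xC_monomial n hn C hC
  have main : ∀ r : List ℕ, (∀ i ∈ r, 1 ≤ i ∧ i < n) →
      r.length = invNum ((r.map (sswap n)).prod) →
      InvSet ((r.map (sswap n)).prod) ⊆ InvSet w →
      ∀ e ∈ ((r.map (fun i => dem i - 1)).prod (xC F n C)
          - monomial (Finsupp.mapDomain (⇑((r.map (sswap n)).prod)) (eCF n C)) (1 : F)).support,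
        List.Lex (· < ·) (lam e) (lam (eCF n C)) := by
    intro r
    induction r with
    | nil =>
      intro _ _ _ e he
      exfalso
      simp only [List.map_nil, List.prod_nil] at he
      rw [hxc, Module.End.one_apply] at he
      have h2 : Finsupp.mapDomain (⇑(1 : Equiv.Perm (Fin n))) (eCF n C) = eCF n C := by
        rw [Equiv.Perm.coe_one, Finsupp.mapDomain_id]
      rw [h2, sub_self] at he
      simp at he
    | cons i r' ih =>
      intro hvalid hlen hsub
      obtain ⟨hi1, hin⟩ := hvalid i List.mem_cons_self
      obtain ⟨a, hva⟩ : ∃ a : Fin n, (a : ℕ) = i - 1 := ⟨⟨i - 1, by omega⟩, rfl⟩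
      obtain ⟨b, hvb⟩ : ∃ b : Fin n, (b : ℕ) = i := ⟨⟨i, hin⟩, rfl⟩
      have hvb' : (b : ℕ) = (a : ℕ) + 1 := by omega
      have hab : a ≠ b := Fin.ne_of_val_ne (by omega)
      set u' := (r'.map (sswap n)).prod with hu'
      have hswap : sswap n i = Equiv.swap a b := by
        rw [sswap_eq hi1 hin]
        congr 1
        · exact Fin.ext (by rw [hva])
        · exact Fin.ext (by rw [hvb])
      have hprodperm : ((i :: r').map (sswap n)).prod = Equiv.swap a b * u' := by
        rw [List.map_cons, List.prod_cons, hswap]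
      have hlb : invNum u' ≤ r'.length :=
        lenbound r' (fun j hj => hvalid j (List.mem_cons_of_mem i hj))
      rw [hprodperm] at hlen hsub
      have hswle := invnum_swap_le a b hvb' u'
      simp only [List.length_cons] at hlen
      have hlen' : r'.length = invNum u' := by omega
      have hsucc : invNum (Equiv.swap a b * u') = invNum u' + 1 := by omega
      have hxy := invnum_succ_lt a b hvb' u' hsucc
      obtain ⟨hnotmem, hins⟩ := invstep_lt a b hvb' u' hxy
      have hsub' : InvSet u' ⊆ InvSet w := by
        intro p hp
        exact hsub (hins ▸ Finset.mem_insert_of_mem hp)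
      have hpairw : (u'.symm a, u'.symm b) ∈ InvSet w :=
        hsub (hins ▸ Finset.mem_insert_self _ _)
      rw [mem_InvSet] at hpairw
      obtain ⟨m, hm1, hm2, hm3⟩ := desc_exists w _ (u'.symm a) (u'.symm b) rfl
        hpairw.1 hpairw.2
      have hmC : m + 1 ∈ C := hw hm3
      have hstrict : eCF n C (u'.symm b) < eCF n C (u'.symm a) :=
        eCF_strict C _ _ m hm1 hm2 hmC
      set d' := Finsupp.mapDomain (⇑u') (eCF n C) with hd'
      have hd'a : d' a = eCF n C (u'.symm a) := Finsupp.mapDomain_equiv_apply _ _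
      have hd'b : d' b = eCF n C (u'.symm b) := Finsupp.mapDomain_equiv_apply _ _
      have hdab : d' b < d' a := by rw [hd'a, hd'b]; exact hstrict
      have IH := ih (fun j hj => hvalid j (List.mem_cons_of_mem i hj)) hlen' hsub'
      intro e he
      have hprodop : ((i :: r').map (fun i => dem i - 1)).prod (xC F n C)
          = (dem i - 1) ((r'.map (fun i => dem i - 1)).prod (xC F n C)) := by
        rw [List.map_cons, List.prod_cons, Module.End.mul_apply]
      have hnewlead : Finsupp.mapDomain (⇑(((i :: r').map (sswap n)).prod)) (eCF n C)
          = DD d' a b (d' b) (d' a) := by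
        rw [hprodperm]
        have hcomp : ⇑(Equiv.swap a b * u') = ⇑(Equiv.swap a b) ∘ ⇑u' := rfl
        rw [hcomp, Finsupp.mapDomain_comp, ← hd', mapDomain_swap_self d' hab]
      set g' := (r'.map (fun i => dem i - 1)).prod (xC F n C) with hg'
      have hsplit : ((i :: r').map (fun i => dem i - 1)).prod (xC F n C)
          - monomial (Finsupp.mapDomain (⇑(((i :: r').map (sswap n)).prod)) (eCF n C)) (1 : F)
          = (dem i - 1) (g' - monomial d' 1)
            + ((dem i - 1) (monomial d' (1 : F)) - monomial (DD d' a b (d' b) (d' a)) 1) := by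
        rw [hprodop, hnewlead, map_sub]
        ring
      rw [hsplit] at he
      rcases Finset.mem_union.mp (MvPolynomial.support_add he) with h1 | h2
      · exact lower_closed dem hdem i hi1 hin a b hva hvb _ _ IH e h1
      · have hstr := supp_pibar_strict dem hdem i hi1 hin a b hva hvb d' hdab e h2
        rw [show lam d' = lam (eCF n C) from lam_perm u' (eCF n C)] at hstr
        exact hstr
  intro dd hd e heC
  have hesupp : e = eCF n C := by
    rw [hxc] at heC
    exact mem_support_monomial heC
  subst hesupp
  apply main rword hr1 (by rw [hr2]; exact hr3) (by rw [hr2]) dd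
  rw [hxc, rename_monomial] at hd
  rw [hr2, hxc]
  exact hd
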